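/- There exists a universal constant $C>0$ with the following property. Let $\bar f:[0,1]\to[0,\infty)$ be continuously differentiable and concave with $\bar f(1)=0$, let $f:[0,1]\to\mathbb R$ be continuous with $|f|\le\bar f$ on $[0,1]$, let $n\ge 1$ be an integer, and define $f_n(r) = -r^{-4n}\int_0^r s^{8n-1}\big(\int_s^1 \tau^{1-4n} f(\tau)\,d\tau\big)ds$ for $r\in(0,1)$. Then for all $r\in(0,1)$: $|f_n''(r)| \le C\,M(r)$, where $M(r)=\sup_{\tau\in[0,r]}\bar f(\tau)+\sup_{\tau\in[0,r]}\tau\bar f'(\tau)$. -/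

import Mathlib

open Real MeasureTheory Set intervalIntegral

private lemma zpow_anti_base {s r : ℝ} (hs : 0 < s) (hsr : s ≤ r) {m : ℤ} (hm : m ≤ 0) :
    r ^ m ≤ s ^ m := by
  obtain ⟨p, rfl⟩ : ∃ p : ℕ, m = -(p : ℤ) := ⟨m.natAbs, by omega⟩
  rw [zpow_neg, zpow_neg, zpow_natCast, zpow_natCast]
  exact inv_anti₀ (pow_pos hs p) (pow_le_pow_left₀ hs.le hsr p)

set_option maxHeartbeats 4000000 in
theorem stmt9 :
    ∃ C > (0:ℝ), ∀ (fbar : ℝ → ℝ),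
      (∀ r ∈ Set.Icc (0:ℝ) 1, 0 ≤ fbar r) →
      (∀ x ∈ Set.Icc (0:ℝ) 1, DifferentiableAt ℝ fbar x) →
      ContinuousOn (deriv fbar) (Set.Icc 0 1) →
      ConcaveOn ℝ (Set.Icc 0 1) fbar →
      fbar 1 = 0 →
      ∀ (f : ℝ → ℝ), ContinuousOn f (Set.Icc 0 1) →
      (∀ r ∈ Set.Icc (0:ℝ) 1, |f r| ≤ fbar r) →
      ∀ (n : ℕ), 1 ≤ n →
      ∀ (fn : ℝ → ℝ),
      (∀ r ∈ Set.Ioo (0:ℝ) 1,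
        fn r = -(r ^ (-(4 * (n:ℤ)))) *
          ∫ s in (0:ℝ)..r, s ^ (8 * (n:ℤ) - 1) * ∫ τ in s..(1:ℝ), τ ^ (1 - 4 * (n:ℤ)) * f τ) →
      ∀ r ∈ Set.Ioo (0:ℝ) 1,
        |deriv (deriv fn) r| ≤ C *
            (sSup (fbar '' Set.Icc 0 r) +
              sSup ((fun τ => τ * deriv fbar τ) '' Set.Icc 0 r)) := by
  refine ⟨16, by norm_num, ?_⟩
  intro fbar hfb0 hfbdiff hfbdc hconc hfb1 f hfc hfle n hn fn hfn r hr
  obtain ⟨hr0, hr1⟩ := hr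
  have hrne : r ≠ 0 := ne_of_gt hr0
  have hn1 : (1:ℝ) ≤ (n:ℝ) := by exact_mod_cast hn
  set N : ℝ := (n : ℝ) with hN
  set q : ℝ → ℝ := fun τ => τ ^ (1 - 4*(n:ℤ)) * f τ with hqdef
  set g : ℝ → ℝ := fun s => ∫ τ in s..(1:ℝ), q τ with hgdef
  set h : ℝ → ℝ := fun s => s ^ (8*(n:ℤ) - 1) * g s with hhdef
  set F : ℝ → ℝ := fun x => ∫ s in (0:ℝ)..x, h s with hFdef
  -- suprema
  set M1 : ℝ := sSup (fbar '' Set.Icc 0 r) with hM1def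
  set M2 : ℝ := sSup ((fun τ => τ * deriv fbar τ) '' Set.Icc 0 r) with hM2def
  have hIccsub : Icc (0:ℝ) r ⊆ Icc 0 1 := Icc_subset_Icc le_rfl hr1.le
  have hfbc : ContinuousOn fbar (Icc 0 1) :=
    fun x hx => ((hfbdiff x hx).continuousAt).continuousWithinAt
  have hM1le : ∀ τ ∈ Icc (0:ℝ) r, fbar τ ≤ M1 := by
    intro τ hτ
    exact le_csSup ((isCompact_Icc.image_of_continuousOn (hfbc.mono hIccsub)).bddAbove)
      (mem_image_of_mem _ hτ)
  have hM10 : 0 ≤ M1 :=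
    le_trans (hfb0 0 ⟨le_rfl, by norm_num⟩) (hM1le 0 ⟨le_rfl, hr0.le⟩)
  have htc : ContinuousOn (fun τ => τ * deriv fbar τ) (Icc 0 r) :=
    (continuous_id.continuousOn).mul (hfbdc.mono hIccsub)
  have hM2le : ∀ τ ∈ Icc (0:ℝ) r, τ * deriv fbar τ ≤ M2 := by
    intro τ hτ
    exact le_csSup ((isCompact_Icc.image_of_continuousOn htc).bddAbove)
      (mem_image_of_mem _ hτ)
  have hM20 : 0 ≤ M2 := by
    have := hM2le 0 ⟨le_rfl, hr0.le⟩
    simpa using this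
  set Minf : ℝ := sSup (fbar '' Set.Icc 0 1) with hMinfdef
  have hMinfle : ∀ τ ∈ Icc (0:ℝ) 1, fbar τ ≤ Minf := by
    intro τ hτ
    exact le_csSup ((isCompact_Icc.image_of_continuousOn hfbc).bddAbove)
      (mem_image_of_mem _ hτ)
  have hMinf0 : 0 ≤ Minf := by
    have := hMinfle 1 ⟨by norm_num, le_rfl⟩; rw [hfb1] at this; exact this
  have hfMinf : ∀ τ ∈ Icc (0:ℝ) 1, |f τ| ≤ Minf :=
    fun τ hτ => le_trans (hfle τ hτ) (hMinfle τ hτ)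
  have hfM1 : ∀ τ ∈ Icc (0:ℝ) r, |f τ| ≤ M1 :=
    fun τ hτ => le_trans (hfle τ (hIccsub hτ)) (hM1le τ hτ)
  -- tangent line bound
  have htan : ∀ τ ∈ Icc r 1, fbar τ ≤ M1 + M2 / r * (τ - r) := by
    intro τ hτ
    rcases eq_or_lt_of_le hτ.1 with heq | hlt
    · rw [← heq]; simpa using hM1le r ⟨hr0.le, le_rfl⟩
    · have hrmem : r ∈ Icc (0:ℝ) 1 := ⟨hr0.le, hr1.le⟩
      have hτmem : τ ∈ Icc (0:ℝ) 1 := ⟨le_trans hr0.le hτ.1, hτ.2⟩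
      have hslope := hconc.neg.deriv_le_slope hrmem hτmem hlt (hfbdiff r hrmem).neg
      rw [slope_def_field] at hslope
      have hderneg : deriv (-fbar) r = -deriv fbar r := deriv.neg
      rw [hderneg] at hslope
      have hd : deriv fbar r ≤ M2 / r := by
        rw [le_div_iff₀ hr0]
        have := hM2le r ⟨hr0.le, le_rfl⟩
        linarith [this]
      have hfr : fbar r ≤ M1 := hM1le r ⟨hr0.le, le_rfl⟩
      have hsl : (fbar τ - fbar r) / (τ - r) ≤ deriv fbar r := by
        have h2 : ((-fbar) τ - (-fbar) r) / (τ - r) = -((fbar τ - fbar r) / (τ - r)) := by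
          simp only [Pi.neg_apply]; ring
        rw [h2] at hslope; linarith
      have hτr : 0 < τ - r := by linarith
      have := (div_le_iff₀ hτr).mp hsl
      nlinarith [mul_le_mul_of_nonneg_right hd hτr.le]
  -- continuity of q
  have hqc : ContinuousOn q (Ioc 0 1) := by
    apply ContinuousOn.mul
    · exact (continuousOn_id.zpow₀ _ (fun x hx => Or.inl (ne_of_gt hx.1)))
    · exact hfc.mono Ioc_subset_Icc_self
  have hqIoo : ContinuousOn q (Ioo 0 1) := hqc.mono Ioo_subset_Ioc_self
  have hqint : ∀ a b : ℝ, a ∈ Ioc (0:ℝ) 1 → b ∈ Ioc (0:ℝ) 1 →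
      IntervalIntegrable q volume a b := by
    intro a b ha hb
    apply (hqc.mono ?_).intervalIntegrable
    intro x hx
    rw [Set.mem_uIcc] at hx
    constructor
    · rcases hx with h1 | h1
      · exact lt_of_lt_of_le ha.1 h1.1
      · exact lt_of_lt_of_le hb.1 h1.1
    · rcases hx with h1 | h1
      · exact le_trans h1.2 hb.2
      · exact le_trans h1.2 ha.2
  -- derivative of g
  have hgd : ∀ s ∈ Ioo (0:ℝ) 1, HasDerivAt g (-q s) s := by
    intro s hs
    exact integral_hasDerivAt_left (hqint s 1 ⟨hs.1, hs.2.le⟩ ⟨one_pos, le_rfl⟩)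
      (hqIoo.stronglyMeasurableAtFilter isOpen_Ioo s hs)
      (hqIoo.continuousAt (isOpen_Ioo.mem_nhds hs))
  have hgc : ContinuousOn g (Ioo 0 1) :=
    fun s hs => ((hgd s hs).continuousAt).continuousWithinAt
  have hhc : ContinuousOn h (Ioo 0 1) := by
    apply ContinuousOn.mul
    · exact (continuousOn_id.zpow₀ _ (fun x hx => Or.inl (ne_of_gt hx.1)))
    · exact hgc
  -- global bound for g
  have hnint : (1:ℤ) ≤ (n:ℤ) := by exact_mod_cast hn
  have hexp1 : (1 - 4*(n:ℤ)) ≤ 0 := by omega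
  have hexp2 : (2 - 4*(n:ℤ)) ≤ 0 := by omega
  have hgMinf : ∀ s ∈ Ioc (0:ℝ) 1, |g s| ≤ Minf * s ^ (2 - 4*(n:ℤ)) := by
    intro s hs
    have hb : ∀ᵐ τ ∂(volume.restrict (Set.uIoc s 1)), ‖q τ‖ ≤ Minf * τ ^ (1 - 4*(n:ℤ)) := by
      rw [uIoc_of_le hs.2]
      refine (ae_restrict_iff' measurableSet_Ioc).mpr (ae_of_all _ fun τ hτ => ?_)
      have hτ0 : 0 < τ := lt_trans hs.1 hτ.1
      have h1 : ‖q τ‖ = τ ^ (1 - 4*(n:ℤ)) * |f τ| := by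
        simp only [hqdef, Real.norm_eq_abs, abs_mul, abs_of_pos (zpow_pos hτ0 _)]
      rw [h1, mul_comm (Minf)]
      exact mul_le_mul_of_nonneg_left (hfMinf τ ⟨hτ0.le, hτ.2⟩) (zpow_pos hτ0 _).le
    have hbint : IntervalIntegrable (fun τ => Minf * τ ^ (1 - 4*(n:ℤ))) volume s 1 := by
      apply ContinuousOn.intervalIntegrable
      apply continuousOn_const.mul
      apply continuousOn_id.zpow₀
      intro x hx
      rw [uIcc_of_le hs.2] at hx
      exact Or.inl (ne_of_gt (lt_of_lt_of_le hs.1 hx.1))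
    have hmain := (intervalIntegral.norm_integral_le_of_norm_le hs.2 ((ae_restrict_iff' measurableSet_Ioc).mp (by rwa [uIoc_of_le hs.2] at hb)) hbint).trans (le_abs_self _)
    have h0uIcc : (0:ℝ) ∉ Set.uIcc s (1:ℝ) := by
      rw [uIcc_of_le hs.2]
      intro hmem
      exact absurd hmem.1 (not_le.mpr hs.1)
    have hval : ∫ τ in s..(1:ℝ), Minf * τ ^ (1 - 4*(n:ℤ))
        = Minf * ((1 - s ^ (2 - 4*(n:ℤ))) / (2 - 4*N)) := by
      rw [intervalIntegral.integral_const_mul, integral_zpow (Or.inr ⟨by omega, h0uIcc⟩)]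
      rw [show (1 - 4*(n:ℤ)) + 1 = 2 - 4*(n:ℤ) by ring]
      rw [one_zpow]
      push_cast
      rw [hN]
      ring_nf
    rw [hval] at hmain
    have hu1 : 1 ≤ s ^ (2 - 4*(n:ℤ)) := one_le_zpow_of_nonpos₀ hs.1 hs.2 hexp2
    set u : ℝ := s ^ (2 - 4*(n:ℤ))
    have hd2 : (2:ℝ) ≤ 4*N - 2 := by linarith
    have heq : Minf * ((1 - u) / (2 - 4*N)) = Minf * ((u - 1) / (4*N - 2)) := by
      have hne1 : (2 - 4*N) ≠ 0 := ne_of_lt (by linarith)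
      have hne2 : (4*N - 2) ≠ 0 := ne_of_gt (by linarith)
      have hdd : (1 - u) / (2 - 4*N) = (u - 1) / (4*N - 2) := by
        rw [div_eq_div_iff hne1 hne2]; ring
      rw [hdd]
    rw [heq, abs_of_nonneg (mul_nonneg hMinf0 (div_nonneg (by linarith) (by linarith)))] at hmain
    refine le_trans hmain ?_
    have : (u - 1) / (4*N - 2) ≤ u := le_trans (div_le_self (by linarith) (by linarith)) (by linarith)
    exact mul_le_mul_of_nonneg_left this hMinf0
  have hhMinf : ∀ s ∈ Ioc (0:ℝ) 1, |h s| ≤ Minf := by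
    intro s hs
    have hsne : s ≠ 0 := ne_of_gt hs.1
    have hcol : s ^ (8*(n:ℤ)-1) * s ^ (2-4*(n:ℤ)) = s ^ (4*(n:ℤ)+1) := by
      rw [← zpow_add₀ hsne]; congr 1; ring
    have hle : s ^ (4*(n:ℤ)+1) ≤ 1 := by
      have := zpow_le_zpow_right_of_le_one₀ hs.1 hs.2 (show (0:ℤ) ≤ 4*(n:ℤ)+1 by omega)
      simpa using this
    calc |h s| = s ^ (8*(n:ℤ)-1) * |g s| := by
          simp only [hhdef, abs_mul, abs_of_pos (zpow_pos hs.1 _)]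
      _ ≤ s ^ (8*(n:ℤ)-1) * (Minf * s ^ (2-4*(n:ℤ))) :=
          mul_le_mul_of_nonneg_left (hgMinf s hs) (zpow_pos hs.1 _).le
      _ = Minf * (s ^ (8*(n:ℤ)-1) * s ^ (2-4*(n:ℤ))) := by ring
      _ = Minf * s ^ (4*(n:ℤ)+1) := by rw [hcol]
      _ ≤ Minf * 1 := mul_le_mul_of_nonneg_left hle hMinf0
      _ = Minf := mul_one _
  have hhint : ∀ x ∈ Ioo (0:ℝ) 1, IntervalIntegrable h volume 0 x := by
    intro x hx
    rw [intervalIntegrable_iff_integrableOn_Ioc_of_le hx.1.le]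
    have hsub : Ioc (0:ℝ) x ⊆ Ioo 0 1 := fun y hy => ⟨hy.1, lt_of_le_of_lt hy.2 hx.2⟩
    apply Integrable.mono' (integrable_const Minf)
    · exact (hhc.mono hsub).aestronglyMeasurable measurableSet_Ioc
    · refine (ae_restrict_iff' measurableSet_Ioc).mpr (ae_of_all _ fun s hs => ?_)
      simpa using hhMinf s ⟨hs.1, le_trans hs.2 hx.2.le⟩
  have hFd : ∀ x ∈ Ioo (0:ℝ) 1, HasDerivAt F (h x) x := by
    intro x hx
    exact integral_hasDerivAt_right (hhint x hx)
      (hhc.stronglyMeasurableAtFilter isOpen_Ioo x hx)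
      (hhc.continuousAt (isOpen_Ioo.mem_nhds hx))
  -- first derivative of fn
  set φ : ℝ → ℝ := fun x => (4*N) * (x ^ (-(4*(n:ℤ))-1) * F x) - x ^ (4*(n:ℤ)-1) * g x
    with hφdef
  have hψd : ∀ x ∈ Ioo (0:ℝ) 1, HasDerivAt (fun y => -(y ^ (-(4 * (n:ℤ)))) * F y) (φ x) x := by
    intro x hx
    have hxne : x ≠ 0 := ne_of_gt hx.1
    have h1 : HasDerivAt (fun y : ℝ => -(y ^ (-(4 * (n:ℤ)))))
        (-(((((-(4 * (n:ℤ))) : ℤ)) : ℝ) * x ^ (-(4 * (n:ℤ)) - 1))) x :=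
      (hasDerivAt_zpow _ x (Or.inl hxne)).neg
    have h3 := h1.mul (hFd x hx)
    have hcol : x ^ (-(4*(n:ℤ))) * x ^ (8*(n:ℤ)-1) = x ^ (4*(n:ℤ)-1) := by
      rw [← zpow_add₀ hxne]; congr 1; ring
    have hval : -(((((-(4 * (n:ℤ))) : ℤ)) : ℝ) * x ^ (-(4 * (n:ℤ)) - 1)) * F x
        + -(x ^ (-(4 * (n:ℤ)))) * h x = φ x := by
      simp only [hφdef, hhdef]
      push_cast
      linear_combination (-(g x)) * hcol
    exact hval ▸ h3
  have hderiv1 : ∀ x ∈ Ioo (0:ℝ) 1, deriv fn x = φ x := by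
    intro x hx
    have hev : fn =ᶠ[nhds x] (fun y => -(y ^ (-(4 * (n:ℤ)))) * F y) :=
      Filter.eventuallyEq_of_mem (isOpen_Ioo.mem_nhds hx) (fun y hy => hfn y hy)
    rw [hev.deriv_eq, (hψd x hx).deriv]
  set E : ℝ := -(4*N*(4*N+1)) * (r ^ (-(4*(n:ℤ))-2) * F r) + r ^ (4*(n:ℤ)-2) * g r + f r
    with hEdef
  have hφd : HasDerivAt φ E r := by
    have hrIoo : r ∈ Ioo (0:ℝ) 1 := ⟨hr0, hr1⟩
    have p1 : HasDerivAt (fun y : ℝ => y ^ (-(4*(n:ℤ))-1))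
        ((((-(4*(n:ℤ))-1) : ℤ) : ℝ) * r ^ (-(4*(n:ℤ))-1-1)) r :=
      hasDerivAt_zpow _ r (Or.inl hrne)
    have p3 : HasDerivAt (fun y : ℝ => y ^ (4*(n:ℤ)-1))
        ((((4*(n:ℤ)-1) : ℤ) : ℝ) * r ^ (4*(n:ℤ)-1-1)) r :=
      hasDerivAt_zpow _ r (Or.inl hrne)
    have h5 := ((p1.mul (hFd r hrIoo)).const_mul (4*N)).sub (p3.mul (hgd r hrIoo))
    have hcol2 : r ^ (-(4*(n:ℤ))-1) * r ^ (8*(n:ℤ)-1) = r ^ (4*(n:ℤ)-2) := by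
      rw [← zpow_add₀ hrne]; congr 1; ring
    have hcol3 : r ^ (4*(n:ℤ)-1) * r ^ (1-4*(n:ℤ)) = 1 := by
      rw [← zpow_add₀ hrne]
      norm_num
    have he1 : (-(4*(n:ℤ))-1-1) = -(4*(n:ℤ))-2 := by ring
    have he2 : (4*(n:ℤ)-1-1) = 4*(n:ℤ)-2 := by ring
    rw [he1, he2] at h5
    have hval : 4*N * ((((-(4*(n:ℤ))-1) : ℤ) : ℝ) * r ^ (-(4*(n:ℤ))-2) * F r
          + r ^ (-(4*(n:ℤ))-1) * h r)
        - ((((4*(n:ℤ)-1) : ℤ) : ℝ) * r ^ (4*(n:ℤ)-2) * g r + r ^ (4*(n:ℤ)-1) * (-q r)) = E := by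
      simp only [hEdef, hhdef, hqdef]
      push_cast
      linear_combination (4*N*(g r)) * hcol2 + (f r) * hcol3
    exact hval ▸ h5
  have hderiv2 : deriv (deriv fn) r = E := by
    have hev : deriv fn =ᶠ[nhds r] φ :=
      Filter.eventuallyEq_of_mem (isOpen_Ioo.mem_nhds ⟨hr0, hr1⟩) hderiv1
    rw [hev.deriv_eq, hφd.deriv]
  -- refined bound for g on (0, r]
  set B : ℝ := (2*M1 + M2) / (4*N - 3) with hBdef
  have hB0 : 0 ≤ B := by
    apply div_nonneg (by linarith) (by linarith)
  have hd3 : (1:ℝ) ≤ 4*N - 3 := by linarith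
  have hd2 : (2:ℝ) ≤ 4*N - 2 := by linarith
  have hgB : ∀ s ∈ Ioc (0:ℝ) r, |g s| ≤ B * s ^ (2 - 4*(n:ℤ)) := by
    intro s hs
    have hs0 : 0 < s := hs.1
    have hsmem : s ∈ Ioc (0:ℝ) 1 := ⟨hs0, le_trans hs.2 hr1.le⟩
    have hrmem : r ∈ Ioc (0:ℝ) 1 := ⟨hr0, hr1.le⟩
    have hsplit : g s = (∫ τ in s..r, q τ) + ∫ τ in r..(1:ℝ), q τ :=
      (integral_add_adjacent_intervals (hqint s r hsmem hrmem)
        (hqint r 1 hrmem ⟨one_pos, le_rfl⟩)).symm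
    set u : ℝ := s ^ (2 - 4*(n:ℤ)) with hudef
    set v : ℝ := r ^ (2 - 4*(n:ℤ)) with hvdef
    have hv0 : 0 < v := zpow_pos hr0 _
    have hvu : v ≤ u := zpow_anti_base hs0 hs.2 hexp2
    -- part 1 : integral from s to r
    have h1 : |∫ τ in s..r, q τ| ≤ M1 * ((u - v) / (4*N - 2)) := by
      have hb : ∀ᵐ τ ∂(volume.restrict (Set.uIoc s r)), ‖q τ‖ ≤ M1 * τ ^ (1 - 4*(n:ℤ)) := by
        rw [uIoc_of_le hs.2]
        refine (ae_restrict_iff' measurableSet_Ioc).mpr (ae_of_all _ fun τ hτ => ?_)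
        have hτ0 : 0 < τ := lt_trans hs0 hτ.1
        have he : ‖q τ‖ = τ ^ (1 - 4*(n:ℤ)) * |f τ| := by
          simp only [hqdef, Real.norm_eq_abs, abs_mul, abs_of_pos (zpow_pos hτ0 _)]
        rw [he, mul_comm M1]
        exact mul_le_mul_of_nonneg_left (hfM1 τ ⟨hτ0.le, hτ.2⟩) (zpow_pos hτ0 _).le
      have hbint : IntervalIntegrable (fun τ => M1 * τ ^ (1 - 4*(n:ℤ))) volume s r := by
        apply ContinuousOn.intervalIntegrable
        apply continuousOn_const.mul
        apply continuousOn_id.zpow₀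
        intro x hx
        rw [uIcc_of_le hs.2] at hx
        exact Or.inl (ne_of_gt (lt_of_lt_of_le hs0 hx.1))
      have hmain := (intervalIntegral.norm_integral_le_of_norm_le hs.2 ((ae_restrict_iff' measurableSet_Ioc).mp (by rwa [uIoc_of_le hs.2] at hb)) hbint).trans (le_abs_self _)
      have h0uIcc : (0:ℝ) ∉ Set.uIcc s r := by
        rw [uIcc_of_le hs.2]
        intro hmem
        exact absurd hmem.1 (not_le.mpr hs0)
      have hval : ∫ τ in s..r, M1 * τ ^ (1 - 4*(n:ℤ)) = M1 * ((v - u) / (2 - 4*N)) := by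
        rw [hudef, hvdef, intervalIntegral.integral_const_mul,
          integral_zpow (Or.inr ⟨by omega, h0uIcc⟩)]
        rw [show (1 - 4*(n:ℤ)) + 1 = 2 - 4*(n:ℤ) by ring]
        push_cast
        rw [hN]
        ring_nf
      rw [hval] at hmain
      have hdd : M1 * ((v - u) / (2 - 4*N)) = M1 * ((u - v) / (4*N - 2)) := by
        have hne1 : (2 - 4*N) ≠ 0 := ne_of_lt (by linarith)
        have hne2 : (4*N - 2) ≠ 0 := ne_of_gt (by linarith)
        have : (v - u) / (2 - 4*N) = (u - v) / (4*N - 2) := by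
          rw [div_eq_div_iff hne1 hne2]; ring
        rw [this]
      rw [hdd, abs_of_nonneg (mul_nonneg hM10 (div_nonneg (by linarith) (by linarith)))] at hmain
      exact hmain
    -- part 2 : integral from r to 1
    have h2 : |∫ τ in r..(1:ℝ), q τ| ≤ (M1 / (4*N - 2) + M2 / (4*N - 3)) * v := by
      set w : ℝ := r ^ (3 - 4*(n:ℤ)) with hwdef
      have hw0 : 0 < w := zpow_pos hr0 _
      have hw1 : 1 ≤ w := one_le_zpow_of_nonpos₀ hr0 hr1.le (by omega)
      have hv1 : 1 ≤ v := one_le_zpow_of_nonpos₀ hr0 hr1.le hexp2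
      have hwv : w = r * v := by
        rw [hwdef, hvdef, show (3 - 4*(n:ℤ)) = 1 + (2 - 4*(n:ℤ)) by ring, zpow_add₀ hrne, zpow_one]
      have hb : ∀ᵐ τ ∂(volume.restrict (Set.uIoc r 1)),
          ‖q τ‖ ≤ M1 * τ ^ (1 - 4*(n:ℤ)) + (M2/r) * τ ^ (2 - 4*(n:ℤ)) := by
        rw [uIoc_of_le hr1.le]
        refine (ae_restrict_iff' measurableSet_Ioc).mpr (ae_of_all _ fun τ hτ => ?_)
        have hτ0 : 0 < τ := lt_trans hr0 hτ.1
        have hτne : τ ≠ 0 := ne_of_gt hτ0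
        have hzp : (0:ℝ) < τ ^ (1 - 4*(n:ℤ)) := zpow_pos hτ0 _
        have he : ‖q τ‖ = τ ^ (1 - 4*(n:ℤ)) * |f τ| := by
          simp only [hqdef, Real.norm_eq_abs, abs_mul, abs_of_pos hzp]
        have hfb : |f τ| ≤ M1 + M2 / r * (τ - r) :=
          le_trans (hfle τ ⟨hτ0.le, hτ.2⟩) (htan τ ⟨hτ.1.le, hτ.2⟩)
        have hcol : τ ^ (1 - 4*(n:ℤ)) * τ = τ ^ (2 - 4*(n:ℤ)) := by
          rw [show (2 - 4*(n:ℤ)) = (1 - 4*(n:ℤ)) + 1 by ring, zpow_add₀ hτne, zpow_one]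
        have hM2r : 0 ≤ M2 / r := div_nonneg hM20 hr0.le
        calc ‖q τ‖ = τ ^ (1 - 4*(n:ℤ)) * |f τ| := he
          _ ≤ τ ^ (1 - 4*(n:ℤ)) * (M1 + M2 / r * (τ - r)) :=
              mul_le_mul_of_nonneg_left hfb hzp.le
          _ ≤ τ ^ (1 - 4*(n:ℤ)) * (M1 + M2 / r * τ) := by
              have : M2 / r * (τ - r) ≤ M2 / r * τ :=
                mul_le_mul_of_nonneg_left (by linarith) hM2r
              exact mul_le_mul_of_nonneg_left (by linarith) hzp.le
          _ = M1 * τ ^ (1 - 4*(n:ℤ)) + (M2/r) * (τ ^ (1 - 4*(n:ℤ)) * τ) := by ring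
          _ = M1 * τ ^ (1 - 4*(n:ℤ)) + (M2/r) * τ ^ (2 - 4*(n:ℤ)) := by rw [hcol]
      have h0uIcc : (0:ℝ) ∉ Set.uIcc r (1:ℝ) := by
        rw [uIcc_of_le hr1.le]
        intro hmem
        exact absurd hmem.1 (not_le.mpr hr0)
      have hcont1 : IntervalIntegrable (fun τ => M1 * τ ^ (1 - 4*(n:ℤ))) volume r 1 := by
        apply ContinuousOn.intervalIntegrable
        apply continuousOn_const.mul
        apply continuousOn_id.zpow₀
        intro x hx
        rw [uIcc_of_le hr1.le] at hx
        exact Or.inl (ne_of_gt (lt_of_lt_of_le hr0 hx.1))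
      have hcont2 : IntervalIntegrable (fun τ => (M2/r) * τ ^ (2 - 4*(n:ℤ))) volume r 1 := by
        apply ContinuousOn.intervalIntegrable
        apply continuousOn_const.mul
        apply continuousOn_id.zpow₀
        intro x hx
        rw [uIcc_of_le hr1.le] at hx
        exact Or.inl (ne_of_gt (lt_of_lt_of_le hr0 hx.1))
      have hbint := hcont1.add hcont2
      have hmain := (intervalIntegral.norm_integral_le_of_norm_le hr1.le ((ae_restrict_iff' measurableSet_Ioc).mp (by rwa [uIoc_of_le hr1.le] at hb)) hbint).trans (le_abs_self _)
      have hval : ∫ τ in r..(1:ℝ),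
          (M1 * τ ^ (1 - 4*(n:ℤ)) + (M2/r) * τ ^ (2 - 4*(n:ℤ)))
          = M1 * ((1 - v) / (2 - 4*N)) + (M2/r) * ((1 - w) / (3 - 4*N)) := by
        rw [intervalIntegral.integral_add hcont1 hcont2,
          intervalIntegral.integral_const_mul, intervalIntegral.integral_const_mul,
          integral_zpow (Or.inr ⟨by omega, h0uIcc⟩), integral_zpow (Or.inr ⟨by omega, h0uIcc⟩)]
        rw [show (1 - 4*(n:ℤ)) + 1 = 2 - 4*(n:ℤ) by ring,
          show (2 - 4*(n:ℤ)) + 1 = 3 - 4*(n:ℤ) by ring, hvdef, hwdef, one_zpow, one_zpow]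
        push_cast
        rw [hN]
        ring_nf
      rw [hval] at hmain
      have hne1 : (2 - 4*N) ≠ 0 := ne_of_lt (by linarith)
      have hne2 : (4*N - 2) ≠ 0 := ne_of_gt (by linarith)
      have hne3 : (3 - 4*N) ≠ 0 := ne_of_lt (by linarith)
      have hne4 : (4*N - 3) ≠ 0 := ne_of_gt (by linarith)
      have hdd : M1 * ((1 - v) / (2 - 4*N)) + (M2/r) * ((1 - w) / (3 - 4*N))
          = M1 * ((v - 1) / (4*N - 2)) + (M2/r) * ((w - 1) / (4*N - 3)) := by
        have e1 : (1 - v) / (2 - 4*N) = (v - 1) / (4*N - 2) := by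
          rw [div_eq_div_iff hne1 hne2]; ring
        have e2 : (1 - w) / (3 - 4*N) = (w - 1) / (4*N - 3) := by
          rw [div_eq_div_iff hne3 hne4]; ring
        rw [e1, e2]
      rw [hdd] at hmain
      have hpos : 0 ≤ M1 * ((v - 1) / (4*N - 2)) + (M2/r) * ((w - 1) / (4*N - 3)) := by
        have := div_nonneg hM20 hr0.le
        have h1' : 0 ≤ (v - 1) / (4*N - 2) := div_nonneg (by linarith) (by linarith)
        have h2' : 0 ≤ (w - 1) / (4*N - 3) := div_nonneg (by linarith) (by linarith)
        positivity
      rw [abs_of_nonneg hpos] at hmain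
      refine le_trans hmain ?_
      have hM2r : 0 ≤ M2 / r := div_nonneg hM20 hr0.le
      have hstep1 : M1 * ((v - 1) / (4*N - 2)) ≤ M1 / (4*N - 2) * v := by
        have e : M1 / (4*N - 2) * v = M1 * (v / (4*N - 2)) := by ring
        rw [e]
        exact mul_le_mul_of_nonneg_left
          ((div_le_div_iff_of_pos_right (by linarith)).mpr (by linarith)) hM10
      have hstep2 : (M2/r) * ((w - 1) / (4*N - 3)) ≤ M2 / (4*N - 3) * v := by
        have : (M2/r) * ((w - 1) / (4*N - 3)) ≤ (M2/r) * (w / (4*N - 3)) :=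
          mul_le_mul_of_nonneg_left
            ((div_le_div_iff_of_pos_right (by linarith)).mpr (by linarith)) hM2r
        refine le_trans this (le_of_eq ?_)
        rw [hwv]
        have e : M2 / r * (r * v / (4*N - 3)) = (r / r) * (M2 / (4*N - 3) * v) := by ring
        rw [e, div_self hrne, one_mul]
      calc M1 * ((v - 1) / (4*N - 2)) + (M2/r) * ((w - 1) / (4*N - 3))
          ≤ M1 / (4*N - 2) * v + M2 / (4*N - 3) * v := add_le_add hstep1 hstep2
        _ = (M1 / (4*N - 2) + M2 / (4*N - 3)) * v := by ring
    -- combine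
    have habs : |g s| ≤ M1 * ((u - v) / (4*N - 2)) + (M1 / (4*N - 2) + M2 / (4*N - 3)) * v := by
      rw [hsplit]
      exact le_trans (abs_add_le _ _) (add_le_add h1 h2)
    refine le_trans habs ?_
    have hu0 : 0 < u := lt_of_lt_of_le hv0 hvu
    have e3 : M1 * ((u - v) / (4*N - 2)) + (M1 / (4*N - 2) + M2 / (4*N - 3)) * v
        = M1 * u / (4*N - 2) + M2 * v / (4*N - 3) := by
      ring
    rw [e3, hBdef]
    have hstep3 : M1 * u / (4*N - 2) ≤ M1 * u / (4*N - 3) :=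
      div_le_div_of_nonneg_left (mul_nonneg hM10 hu0.le) (by linarith) (by linarith)
    have hstep4 : M2 * v / (4*N - 3) ≤ M2 * u / (4*N - 3) :=
      (div_le_div_iff_of_pos_right (by linarith)).mpr (mul_le_mul_of_nonneg_left hvu hM20)
    calc M1 * u / (4*N - 2) + M2 * v / (4*N - 3)
        ≤ M1 * u / (4*N - 3) + M2 * u / (4*N - 3) := add_le_add hstep3 hstep4
      _ = (M1 + M2) * u / (4*N - 3) := by ring
      _ ≤ (2*M1 + M2) / (4*N - 3) * u := by
          rw [div_mul_eq_mul_div]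
          exact (div_le_div_iff_of_pos_right (by linarith)).mpr
            (mul_le_mul_of_nonneg_right (by linarith) hu0.le)
  have hFB : |F r| ≤ B * r ^ (4*(n:ℤ)+2) / (4*N+2) := by
    have hb : ∀ᵐ s ∂(volume.restrict (Set.uIoc 0 r)), ‖h s‖ ≤ B * s ^ (4*(n:ℤ)+1) := by
      rw [uIoc_of_le hr0.le]
      refine (ae_restrict_iff' measurableSet_Ioc).mpr (ae_of_all _ fun s hs => ?_)
      have hs0 : 0 < s := hs.1
      have hsne : s ≠ 0 := ne_of_gt hs0
      have hcol : s ^ (8*(n:ℤ)-1) * s ^ (2 - 4*(n:ℤ)) = s ^ (4*(n:ℤ)+1) := by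
        rw [← zpow_add₀ hsne]; congr 1; ring
      calc ‖h s‖ = s ^ (8*(n:ℤ)-1) * |g s| := by
            simp only [hhdef, Real.norm_eq_abs, abs_mul, abs_of_pos (zpow_pos hs0 _)]
        _ ≤ s ^ (8*(n:ℤ)-1) * (B * s ^ (2 - 4*(n:ℤ))) :=
            mul_le_mul_of_nonneg_left (hgB s hs) (zpow_pos hs0 _).le
        _ = B * (s ^ (8*(n:ℤ)-1) * s ^ (2 - 4*(n:ℤ))) := by ring
        _ = B * s ^ (4*(n:ℤ)+1) := by rw [hcol]
    have hbint : IntervalIntegrable (fun s => B * s ^ (4*(n:ℤ)+1)) volume 0 r := by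
      apply ContinuousOn.intervalIntegrable
      apply continuousOn_const.mul
      apply continuousOn_id.zpow₀
      intro x hx
      exact Or.inr (by omega)
    have hmain := (intervalIntegral.norm_integral_le_of_norm_le hr0.le ((ae_restrict_iff' measurableSet_Ioc).mp (by rwa [uIoc_of_le hr0.le] at hb)) hbint).trans (le_abs_self _)
    have hval : ∫ s in (0:ℝ)..r, B * s ^ (4*(n:ℤ)+1) = B * r ^ (4*(n:ℤ)+2) / (4*N+2) := by
      rw [intervalIntegral.integral_const_mul, integral_zpow (Or.inl (by omega))]
      rw [show (4*(n:ℤ)+1) + 1 = 4*(n:ℤ)+2 by ring, zero_zpow _ (by omega)]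
      push_cast
      rw [hN]
      ring_nf
    rw [hval] at hmain
    rwa [abs_of_nonneg (div_nonneg (mul_nonneg hB0 (zpow_pos hr0 _).le) (by linarith))] at hmain
  -- final assembly
  rw [hderiv2]
  have hzp1 : (0:ℝ) < r ^ (-(4*(n:ℤ))-2) := zpow_pos hr0 _
  have hzp2 : (0:ℝ) < r ^ (4*(n:ℤ)-2) := zpow_pos hr0 _
  have hval1 : r ^ (-(4*(n:ℤ))-2) * r ^ (4*(n:ℤ)+2) = 1 := by
    rw [← zpow_add₀ hrne, show -(4*(n:ℤ))-2 + (4*(n:ℤ)+2) = 0 by ring, zpow_zero]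
  have hval2 : r ^ (4*(n:ℤ)-2) * r ^ (2-4*(n:ℤ)) = 1 := by
    rw [← zpow_add₀ hrne, show 4*(n:ℤ)-2 + (2-4*(n:ℤ)) = 0 by ring, zpow_zero]
  have hgr : |g r| ≤ B * r ^ (2-4*(n:ℤ)) := hgB r ⟨hr0, le_rfl⟩
  have hfr : |f r| ≤ M1 := hfM1 r ⟨hr0.le, le_rfl⟩
  have habs : |E| ≤ (4*N*(4*N+1)) * (r ^ (-(4*(n:ℤ))-2) * |F r|)
      + r ^ (4*(n:ℤ)-2) * |g r| + |f r| := by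
    rw [hEdef]
    refine le_trans (abs_add_three _ _ _) ?_
    have e1 : |(-(4*N*(4*N+1))) * (r ^ (-(4*(n:ℤ))-2) * F r)|
        = (4*N*(4*N+1)) * (r ^ (-(4*(n:ℤ))-2) * |F r|) := by
      rw [abs_mul, abs_mul, abs_neg, abs_of_nonneg (show (0:ℝ) ≤ 4*N*(4*N+1) by positivity),
        abs_of_pos hzp1]
    have e2 : |r ^ (4*(n:ℤ)-2) * g r| = r ^ (4*(n:ℤ)-2) * |g r| := by
      rw [abs_mul, abs_of_pos hzp2]
    rw [e1, e2]
  refine le_trans habs ?_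
  have hT1 : (4*N*(4*N+1)) * (r ^ (-(4*(n:ℤ))-2) * |F r|) ≤ 4*N * B := by
    have h1 : r ^ (-(4*(n:ℤ))-2) * |F r|
        ≤ r ^ (-(4*(n:ℤ))-2) * (B * r ^ (4*(n:ℤ)+2) / (4*N+2)) :=
      mul_le_mul_of_nonneg_left hFB hzp1.le
    have h2 : r ^ (-(4*(n:ℤ))-2) * (B * r ^ (4*(n:ℤ)+2) / (4*N+2))
        = B / (4*N+2) * (r ^ (-(4*(n:ℤ))-2) * r ^ (4*(n:ℤ)+2)) := by ring
    rw [h2, hval1, mul_one] at h1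
    calc (4*N*(4*N+1)) * (r ^ (-(4*(n:ℤ))-2) * |F r|)
        ≤ (4*N*(4*N+1)) * (B / (4*N+2)) :=
          mul_le_mul_of_nonneg_left h1 (by positivity)
      _ ≤ 4*N * B := by
          have e : (4*N*(4*N+1)) * (B / (4*N+2)) = B * ((4*N*(4*N+1)) / (4*N+2)) := by ring
          rw [e]
          have hq : (4*N*(4*N+1)) / (4*N+2) ≤ 4*N := by
            rw [div_le_iff₀ (by linarith)]
            nlinarith
          calc B * ((4*N*(4*N+1)) / (4*N+2)) ≤ B * (4*N) := mul_le_mul_of_nonneg_left hq hB0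
            _ = 4*N*B := by ring
  have hT2 : r ^ (4*(n:ℤ)-2) * |g r| ≤ B := by
    have h1 : r ^ (4*(n:ℤ)-2) * |g r| ≤ r ^ (4*(n:ℤ)-2) * (B * r ^ (2-4*(n:ℤ))) :=
      mul_le_mul_of_nonneg_left hgr hzp2.le
    have h2 : r ^ (4*(n:ℤ)-2) * (B * r ^ (2-4*(n:ℤ)))
        = B * (r ^ (4*(n:ℤ)-2) * r ^ (2-4*(n:ℤ))) := by ring
    rw [h2, hval2, mul_one] at h1
    exact h1
  have hBineq : 4*N*B + B ≤ 5*(2*M1+M2) := by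
    have e : 4*N*B + B = ((4*N+1) * (2*M1+M2)) / (4*N-3) := by rw [hBdef]; ring
    rw [e, div_le_iff₀ (by linarith)]
    nlinarith [mul_nonneg (show (0:ℝ) ≤ 2*M1+M2 by linarith) (show (0:ℝ) ≤ N - 1 by linarith)]
  linarith [hT1, hT2, hfr, hM10, hM20, hBineq]
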